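/- Let a < b be positive reals and suppose Θ̄₁, Θ̄₂ : [0,∞) × (0,∞) → ℝ are C¹ solutions of the system ∂_t Θ̄₁ + 4γ∂_γ Θ̄₁ + 6Θ̄₁ − 13Θ̄₂ = 0 and ∂_t Θ̄₂ + 4γ∂_γ Θ̄₂ + 9Θ̄₂ − (10/(1+γ²))(Θ̄₁ + γ² A(t)) = 0 where A(t) = (2/π)∫₀^{π/2} Θ̄₁(t, tan θ) dθ, with Θ̄ᵢ(t,γ)/γ² integrable on (0,∞) together with its t-derivative, and with appropriate decay at γ = 0 and γ = ∞ (so that boundary terms vanish). Then the quantity I(t) := ∫₀^∞ (Θ̄₁(t,γ) + Θ̄₂(t,γ)) γ^{-2} dγ is constant in t. -/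

import Mathlib

open Real MeasureTheory Set intervalIntegral

/-- `tan` maps `(0, π/2)` onto `(0, ∞)`. -/
lemma tan_image_Ioo : Real.tan '' Ioo 0 (π / 2) = Ioi (0 : ℝ) := by
  apply Subset.antisymm
  · rintro _ ⟨θ, ⟨h0, h1⟩, rfl⟩
    exact Real.tan_pos_of_pos_of_lt_pi_div_two h0 h1
  · intro y hy
    refine ⟨Real.arctan y, ⟨?_, Real.arctan_lt_pi_div_two y⟩, Real.tan_arctan y⟩
    rw [← Real.arctan_zero]
    exact Real.arctan_strictMono hy

/-- Change of variables: the angular average equals a `γ`-integral. -/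
lemma tan_substitution (F : ℝ → ℝ) :
    (∫ θ in (0 : ℝ)..(π / 2), F (Real.tan θ))
      = ∫ γ in Ioi (0 : ℝ), F γ * (1 + γ ^ 2)⁻¹ := by
  have hsub : Ioo 0 (π / 2) ⊆ Ioo (-(π / 2)) (π / 2) := by
    apply Ioo_subset_Ioo _ le_rfl
    have := Real.pi_pos
    linarith
  have himg := tan_image_Ioo
  have hderiv : ∀ θ ∈ Ioo (0 : ℝ) (π / 2),
      HasDerivWithinAt Real.tan (1 / Real.cos θ ^ 2) (Ioo 0 (π / 2)) θ := by
    intro θ hθ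
    exact (Real.hasDerivAt_tan (Real.cos_pos_of_mem_Ioo (hsub hθ)).ne').hasDerivWithinAt
  have hinj : InjOn Real.tan (Ioo 0 (π / 2)) := Real.injOn_tan.mono hsub
  have key := MeasureTheory.integral_image_eq_integral_abs_deriv_smul
    measurableSet_Ioo hderiv hinj (fun γ => F γ * (1 + γ ^ 2)⁻¹)
  rw [himg] at key
  rw [key, intervalIntegral.integral_of_le (by positivity : (0:ℝ) ≤ π / 2),
    MeasureTheory.integral_Ioc_eq_integral_Ioo]
  apply setIntegral_congr_fun measurableSet_Ioo
  intro θ hθ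
  have hc : 0 < Real.cos θ := Real.cos_pos_of_mem_Ioo (hsub hθ)
  have h1 : (1 + Real.tan θ ^ 2)⁻¹ = Real.cos θ ^ 2 := Real.inv_one_add_tan_sq hc.ne'
  show F (Real.tan θ) = |1 / Real.cos θ ^ 2| • (F (Real.tan θ) * (1 + Real.tan θ ^ 2)⁻¹)
  rw [smul_eq_mul, h1, abs_of_pos (by positivity : (0:ℝ) < 1 / Real.cos θ ^ 2)]
  field_simp

theorem invariant_constant
    (Θ₁ Θ₂ dtΘ₁ dtΘ₂ dgΘ₁ dgΘ₂ : ℝ → ℝ → ℝ) (A : ℝ → ℝ)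
    -- C¹ regularity: time and space derivatives
    (hdt1 : ∀ t γ, 0 ≤ t → 0 < γ → HasDerivAt (fun s => Θ₁ s γ) (dtΘ₁ t γ) t)
    (hdt2 : ∀ t γ, 0 ≤ t → 0 < γ → HasDerivAt (fun s => Θ₂ s γ) (dtΘ₂ t γ) t)
    (hdg1 : ∀ t γ, 0 ≤ t → 0 < γ → HasDerivAt (fun x => Θ₁ t x) (dgΘ₁ t γ) γ)
    (hdg2 : ∀ t γ, 0 ≤ t → 0 < γ → HasDerivAt (fun x => Θ₂ t x) (dgΘ₂ t γ) γ)
    -- the angular average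
    (hA : ∀ t, A t = (2 / π) * ∫ θ in (0 : ℝ)..(π / 2), Θ₁ t (Real.tan θ))
    -- the PDE system
    (hpde1 : ∀ t γ, 0 ≤ t → 0 < γ →
      dtΘ₁ t γ + 4 * γ * dgΘ₁ t γ + 6 * Θ₁ t γ - 13 * Θ₂ t γ = 0)
    (hpde2 : ∀ t γ, 0 ≤ t → 0 < γ →
      dtΘ₂ t γ + 4 * γ * dgΘ₂ t γ + 9 * Θ₂ t γ
        - (10 / (1 + γ ^ 2)) * (Θ₁ t γ + γ ^ 2 * A t) = 0)
    -- integrability of Θᵢ/γ² and of the time derivatives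
    (hint : ∀ t, 0 ≤ t →
      IntegrableOn (fun γ => Θ₁ t γ / γ ^ 2) (Ioi 0) ∧
      IntegrableOn (fun γ => Θ₂ t γ / γ ^ 2) (Ioi 0) ∧
      IntegrableOn (fun γ => dtΘ₁ t γ / γ ^ 2) (Ioi 0) ∧
      IntegrableOn (fun γ => dtΘ₂ t γ / γ ^ 2) (Ioi 0))
    -- differentiation under the integral sign
    (hdiff : ∀ t, 0 ≤ t →
      HasDerivAt (fun s => ∫ γ in Ioi (0 : ℝ), (Θ₁ s γ + Θ₂ s γ) / γ ^ 2)
        (∫ γ in Ioi (0 : ℝ), (dtΘ₁ t γ + dtΘ₂ t γ) / γ ^ 2) t)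
    -- integration by parts with vanishing boundary terms (decay at 0 and ∞)
    (hibp : ∀ t, 0 ≤ t →
      (∫ γ in Ioi (0 : ℝ), (γ * dgΘ₁ t γ + γ * dgΘ₂ t γ) / γ ^ 2)
        = ∫ γ in Ioi (0 : ℝ), (Θ₁ t γ + Θ₂ t γ) / γ ^ 2) :
    ∀ t₁ t₂ : ℝ, 0 ≤ t₁ → 0 ≤ t₂ →
      (∫ γ in Ioi (0 : ℝ), (Θ₁ t₁ γ + Θ₂ t₁ γ) / γ ^ 2)
        = ∫ γ in Ioi (0 : ℝ), (Θ₁ t₂ γ + Θ₂ t₂ γ) / γ ^ 2 := by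
  have hπ : (0:ℝ) < π := Real.pi_pos
  -- the derivative of the invariant vanishes
  have key : ∀ t, 0 ≤ t →
      (∫ γ in Ioi (0 : ℝ), (dtΘ₁ t γ + dtΘ₂ t γ) / γ ^ 2) = 0 := by
    intro t ht
    obtain ⟨i1, i2, i3, i4⟩ := hint t ht
    set w : ℝ → ℝ := fun γ => (1 + γ ^ 2)⁻¹ with hw_def
    have hw : IntegrableOn w (Ioi 0) := integrable_inv_one_add_sq.integrableOn
    -- integrability of Θ₁ * w
    have hΘ1w : IntegrableOn (fun γ => Θ₁ t γ * w γ) (Ioi 0) := by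
      have hbdd : IntegrableOn
          (fun γ => (fun γ => γ ^ 2 * (1 + γ ^ 2)⁻¹) γ * (fun γ => Θ₁ t γ / γ ^ 2) γ)
          (Ioi 0) := by
        apply MeasureTheory.Integrable.bdd_mul (c := 1) i1
        · apply Continuous.aestronglyMeasurable
          exact (continuous_pow 2).mul
            ((continuous_const.add (continuous_pow 2) : Continuous fun x : ℝ => 1 + x ^ 2).inv₀ (fun x => (by positivity : (1:ℝ) + x ^ 2 ≠ 0)))
        · refine Filter.Eventually.of_forall (fun x => ?_)
          rw [Real.norm_eq_abs, abs_of_nonneg (by positivity)]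
          rw [mul_inv_le_iff₀ (by positivity), one_mul]
          nlinarith [sq_nonneg x]
      apply hbdd.congr
      filter_upwards [ae_restrict_mem measurableSet_Ioi] with γ (hγ : 0 < γ)
      have hγ2 : γ ^ 2 ≠ 0 := by positivity
      simp only [hw_def]
      field_simp
    have hAw : IntegrableOn (fun γ => 10 * A t * w γ) (Ioi 0) := hw.const_mul _
    have h12 : IntegrableOn (fun γ => (Θ₁ t γ + Θ₂ t γ) / γ ^ 2) (Ioi 0) := by
      apply (i1.add i2).congr
      filter_upwards with γ using (add_div _ _ _).symm
    have hdt12 : IntegrableOn (fun γ => (dtΘ₁ t γ + dtΘ₂ t γ) / γ ^ 2) (Ioi 0) := by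
      apply (i3.add i4).congr
      filter_upwards with γ using (add_div _ _ _).symm
    -- pointwise identity from the PDEs
    have hptw : ∀ γ ∈ Ioi (0:ℝ), (dtΘ₁ t γ + dtΘ₂ t γ) / γ ^ 2 =
        -4 * ((γ * dgΘ₁ t γ + γ * dgΘ₂ t γ) / γ ^ 2)
          + 4 * ((Θ₁ t γ + Θ₂ t γ) / γ ^ 2)
          - 10 * (Θ₁ t γ * w γ) + 10 * A t * w γ := by
      intro γ hγ
      have hγ' : 0 < γ := hγ
      have e1 := hpde1 t γ ht hγ'
      have e2 := hpde2 t γ ht hγ'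
      have hγ2 : γ ^ 2 ≠ 0 := by positivity
      have h1γ : 1 + γ ^ 2 ≠ 0 := by positivity
      have hd1 : dtΘ₁ t γ = -(4 * γ * dgΘ₁ t γ) - 6 * Θ₁ t γ + 13 * Θ₂ t γ := by
        linarith
      have hd2 : dtΘ₂ t γ = -(4 * γ * dgΘ₂ t γ) - 9 * Θ₂ t γ
          + (10 / (1 + γ ^ 2)) * (Θ₁ t γ + γ ^ 2 * A t) := by linarith
      rw [hd1, hd2]
      simp only [hw_def]
      field_simp
      ring
    -- integrability of the IBP integrand
    have hibpInt : IntegrableOn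
        (fun γ => (γ * dgΘ₁ t γ + γ * dgΘ₂ t γ) / γ ^ 2) (Ioi 0) := by
      have hcomb : IntegrableOn (fun γ =>
          (-(1:ℝ)/4) * ((dtΘ₁ t γ + dtΘ₂ t γ) / γ ^ 2)
          + ((Θ₁ t γ + Θ₂ t γ) / γ ^ 2)
          - (10/4) * (Θ₁ t γ * w γ) + (10 * A t / 4) * w γ) (Ioi 0) := by
        exact (((hdt12.const_mul _).add h12).sub (hΘ1w.const_mul _)).add (hw.const_mul _)
      apply hcomb.congr
      filter_upwards [ae_restrict_mem measurableSet_Ioi] with γ hγ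
      have := hptw γ hγ
      linarith
    -- the substitution for the angular average
    have hsub : (∫ θ in (0 : ℝ)..(π / 2), Θ₁ t (Real.tan θ))
        = ∫ γ in Ioi (0 : ℝ), Θ₁ t γ * w γ := tan_substitution (Θ₁ t)
    -- now compute
    have J1 : IntegrableOn (fun x => -4 * ((x * dgΘ₁ t x + x * dgΘ₂ t x) / x ^ 2)
        + 4 * ((Θ₁ t x + Θ₂ t x) / x ^ 2)) (Ioi 0) :=
      (hibpInt.const_mul (-4)).add (h12.const_mul 4)
    have J3 : IntegrableOn (fun x => 10 * (Θ₁ t x * w x)) (Ioi 0) := hΘ1w.const_mul 10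
    have J2 : IntegrableOn (fun x => -4 * ((x * dgΘ₁ t x + x * dgΘ₂ t x) / x ^ 2)
        + 4 * ((Θ₁ t x + Θ₂ t x) / x ^ 2) - 10 * (Θ₁ t x * w x)) (Ioi 0) := J1.sub J3
    rw [setIntegral_congr_fun measurableSet_Ioi hptw]
    rw [MeasureTheory.integral_add J2 hAw]
    rw [MeasureTheory.integral_sub J1 J3]
    rw [MeasureTheory.integral_add (hibpInt.const_mul (-4)) (h12.const_mul 4)]
    rw [MeasureTheory.integral_const_mul, MeasureTheory.integral_const_mul,
      MeasureTheory.integral_const_mul, MeasureTheory.integral_const_mul]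
    rw [hibp t ht]
    have hwint : (∫ γ in Ioi (0:ℝ), w γ) = π / 2 := by
      simp only [hw_def]
      rw [integral_Ioi_inv_one_add_sq, Real.arctan_zero, sub_zero]
    rw [hwint, hA t, hsub]
    field_simp
    ring
  -- constancy
  set I : ℝ → ℝ := fun s => ∫ γ in Ioi (0 : ℝ), (Θ₁ s γ + Θ₂ s γ) / γ ^ 2 with hI
  have hderiv0 : ∀ t, 0 ≤ t → HasDerivAt I 0 t := by
    intro t ht
    have := hdiff t ht
    rwa [key t ht] at this
  have hconst : ∀ t, 0 ≤ t → I t = I 0 := by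
    intro t ht
    refine constant_of_has_deriv_right_zero (f := I) (a := 0) (b := t)
      (fun x hx => (hderiv0 x hx.1).continuousAt.continuousWithinAt)
      (fun x hx => (hderiv0 x hx.1).hasDerivWithinAt) t ⟨ht, le_refl t⟩
  intro t₁ t₂ h1 h2
  show I t₁ = I t₂
  rw [hconst t₁ h1, hconst t₂ h2]
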